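/- Define f₂(t) = t/(1 - 3t - t² + 2t³), f₄(t) = t·f₂(t), and f₇(t) = (t/(1-2t))·f₂(t) + t/(1-2t), as rational functions over ℝ. Then these satisfy the linear system: (1 - t⁻¹)f₂ + f₄ + 2f₇ = -1, f₂ + (1 - t⁻²)f₄ + 2f₇ = -1, and f₂ + (2 - t⁻¹)f₇ = -1 (as identities of rational functions in t). -/

import Mathlib

noncomputable def f₂ (t : ℝ) : ℝ := t / (1 - 3 * t - t ^ 2 + 2 * t ^ 3)
noncomputable def f₄ (t : ℝ) : ℝ := t * f₂ t
noncomputable def f₇ (t : ℝ) : ℝ := (t / (1 - 2 * t)) * f₂ t + t / (1 - 2 * t)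

theorem stmt_16 (t : ℝ) (ht : t ≠ 0) (ht2 : 1 - 2 * t ≠ 0)
    (htD : 1 - 3 * t - t ^ 2 + 2 * t ^ 3 ≠ 0) :
    (1 - t⁻¹) * f₂ t + f₄ t + 2 * f₇ t = -1 ∧
    f₂ t + (1 - (t ^ 2)⁻¹) * f₄ t + 2 * f₇ t = -1 ∧
    f₂ t + (2 - t⁻¹) * f₇ t = -1 := by
  unfold f₄ f₇ f₂
  have hD2 : 1 - t * 3 - t ^ 2 + t ^ 3 * 2 ≠ 0 := by ring_nf at htD ⊢; exact htD
  have h22 : 1 - t * 2 ≠ 0 := by ring_nf at ht2 ⊢; exact ht2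
  refine ⟨?_, ?_, ?_⟩ <;> field_simp <;> ring
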